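/- Let p ≥ 3 be an integer and let f = (f_{i,j}) be an infinite frieze pattern of type Λ_p. Then every entry f_{i,j} with i < j satisfies f_{i,j} = 1 or f_{i,j} ≥ λ_p; that is, all entries belong to the set {1} ∪ [λ_p, ∞). -/

import Mathlib

/-- `lam p = λ_p = 2 cos (π / p)`. -/
noncomputable def lam (p : ℕ) : ℝ := 2 * Real.cos (Real.pi / p)

/-- An infinite frieze pattern. -/
def IsInfFrieze (f : ℤ → ℤ → ℝ) : Prop :=
  (∀ i : ℤ, f i i = 0) ∧
  (∀ i : ℤ, f i (i + 1) = 1) ∧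
  (∀ i j : ℤ, i + 1 ≤ j → 0 < f i j) ∧
  (∀ i j : ℤ, i + 1 ≤ j → f i j * f (i + 1) (j + 1) - f i (j + 1) * f (i + 1) j = 1)

/-- The frieze pattern is of type `Λ_p`: every quiddity entry is a positive integral
multiple of `λ_p`. -/
def IsTypeLambda (p : ℕ) (f : ℤ → ℤ → ℝ) : Prop :=
  ∀ i : ℤ, ∃ n : ℕ, 0 < n ∧ f i (i + 2) = n * lam p

namespace IFP
open Real

open Real

/-- Chebyshev-like sequence for parameter `l`. -/
noncomputable def S (l : ℝ) : ℕ → ℝ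
  | 0 => 0
  | 1 => 1
  | (n+2) => l * S l (n+1) - S l n

structure Good (l : ℝ) (q : ℕ) : Prop where
  one_le : 1 ≤ l
  le_two : l ≤ 2
  Stop : S l (q+3) = 0
  Stop1 : S l (q+2) = 1
  ge_one : ∀ n, 1 ≤ n → n ≤ q+2 → 1 ≤ S l n
  ge_l : ∀ n, 2 ≤ n → n ≤ q+1 → l ≤ S l n

@[simp] lemma S_zero (l : ℝ) : S l 0 = 0 := rfl
@[simp] lemma S_one (l : ℝ) : S l 1 = 1 := rfl
lemma S_rec (l : ℝ) (n : ℕ) : S l (n+2) = l * S l (n+1) - S l n := rfl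

namespace Good

variable {l : ℝ} {q : ℕ}

lemma l_pos (hg : Good l q) : 0 < l := lt_of_lt_of_le one_pos hg.one_le

lemma Sq1 (hg : Good l q) : S l (q+1) = l := by
  have h := S_rec l (q+1)
  have h2 : q+1+2 = q+3 := by omega
  have h3 : q+1+1 = q+2 := by omega
  rw [h2, h3, hg.Stop, hg.Stop1] at h
  linarith

lemma Sq (hg : Good l q) : S l q = l * l - 1 := by
  have h := S_rec l q
  rw [hg.Stop1, hg.Sq1] at h
  linarith

lemma nonneg (hg : Good l q) : ∀ n, n ≤ q+3 → 0 ≤ S l n := by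
  intro n hn
  rcases Nat.eq_zero_or_pos n with h0 | h1
  · simp [h0]
  rcases eq_or_lt_of_le hn with h | h
  · rw [h, hg.Stop]
  · exact le_trans zero_le_one (hg.ge_one n h1 (by omega))

lemma pos (hg : Good l q) : ∀ n, 1 ≤ n → n ≤ q+2 → 0 < S l n := fun n h1 h2 =>
  lt_of_lt_of_le one_pos (hg.ge_one n h1 h2)

end Good

lemma sin_window {c x : ℝ} (hc : 0 ≤ c) (h1 : c ≤ x) (h2 : x ≤ Real.pi - c) :
    Real.sin c ≤ Real.sin x := by
  rcases le_or_gt x (Real.pi/2) with h | h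
  · exact Real.sin_le_sin_of_le_of_le_pi_div_two (by linarith) h h1
  · rw [← Real.sin_pi_sub x]
    have hpi := Real.pi_pos
    exact Real.sin_le_sin_of_le_of_le_pi_div_two (by linarith) (by linarith) (by linarith)


lemma good_lam (q : ℕ) : Good (lam (q+3)) q := by
  set p : ℕ := q + 3 with hpq
  have hp0 : 0 < (p:ℝ) := by positivity
  set θ := Real.pi / p with hθ
  have hpi := Real.pi_pos
  have hθpos : 0 < θ := by positivity
  have hθle : θ ≤ Real.pi / 3 := by
    rw [hθ]
    apply div_le_div_of_nonneg_left hpi.le (by norm_num)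
    have : (3:ℝ) ≤ (p:ℝ) := by exact_mod_cast Nat.le_add_left 3 q
    linarith
  have hθlt : θ < Real.pi := by linarith
  have hsθ : 0 < Real.sin θ := Real.sin_pos_of_pos_of_lt_pi hθpos hθlt
  have hlam : lam p = 2 * Real.cos θ := rfl
  have key : ∀ n : ℕ, S (lam p) n * Real.sin θ = Real.sin (n * θ) := by
    intro n
    induction n using Nat.twoStepInduction with
    | zero => simp
    | one => simp
    | more n ih1 ih2 =>
      have e1 : ((n:ℝ)+2) * θ = ((n:ℝ)+1) * θ + θ := by ring
      have e2 : (n:ℝ) * θ = ((n:ℝ)+1) * θ - θ := by ring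
      have h3 := Real.sin_sub (((n:ℝ)+1) * θ) θ
      rw [← e2] at h3
      rw [S_rec]
      push_cast
      push_cast at ih1 ih2
      rw [sub_mul, mul_assoc, ih2, ih1, e1, Real.sin_add, hlam]
      linarith [h3]
  have hpθ : (p:ℝ) * θ = Real.pi := by rw [hθ]; field_simp
  have hcast : (p:ℝ) = (q:ℝ) + 3 := by rw [hpq]; push_cast; ring
  constructor
  · rw [hlam]
    have h := Real.cos_le_cos_of_nonneg_of_le_pi hθpos.le (by linarith) hθle
    rw [Real.cos_pi_div_three] at h
    linarith
  · rw [hlam]; nlinarith [Real.cos_le_one θ]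
  · -- S (q+3) = 0
    have h := key (q+3)
    have e : ((q+3 : ℕ) : ℝ) * θ = Real.pi := by push_cast; rw [← hcast, hpθ]
    rw [e, Real.sin_pi] at h
    exact (mul_eq_zero.mp h).resolve_right (ne_of_gt hsθ)
  · -- S (q+2) = 1
    have h := key (q+2)
    have e : ((q+2 : ℕ) : ℝ) * θ = Real.pi - θ := by
      push_cast
      have : ((q:ℝ)+3) * θ = Real.pi := by rw [← hcast, hpθ]
      linarith [this]
    rw [e, Real.sin_pi_sub] at h
    field_simp at h
    exact h
  · -- ge_one
    intro n h1 h2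
    have h := key n
    have w : Real.sin θ ≤ Real.sin ((n:ℝ) * θ) := by
      apply sin_window hθpos.le
      · have : (1:ℝ) ≤ (n:ℝ) := by exact_mod_cast h1
        nlinarith
      · have hn : (n:ℝ) ≤ (q:ℝ)+2 := by exact_mod_cast h2
        have : ((q:ℝ)+3) * θ = Real.pi := by rw [← hcast, hpθ]
        nlinarith
    rw [← h] at w
    have w2 : 1 * Real.sin θ ≤ S (lam p) n * Real.sin θ := by linarith
    exact (mul_le_mul_iff_of_pos_right hsθ).mp w2
  · -- ge_l
    intro n h1 h2
    have h := key n
    have w : Real.sin (2*θ) ≤ Real.sin ((n:ℝ) * θ) := by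
      apply sin_window (by linarith)
      · have : (2:ℝ) ≤ (n:ℝ) := by exact_mod_cast h1
        nlinarith
      · have hn : (n:ℝ) ≤ (q:ℝ)+1 := by exact_mod_cast h2
        have : ((q:ℝ)+3) * θ = Real.pi := by rw [← hcast, hpθ]
        nlinarith
    rw [← h, Real.sin_two_mul] at w
    have w2 : lam p * Real.sin θ ≤ S (lam p) n * Real.sin θ := by
      have e : lam p * Real.sin θ = 2 * Real.sin θ * Real.cos θ := by rw [hlam]; ring
      rw [e]; exact w
    exact (mul_le_mul_iff_of_pos_right hsθ).mp w2


abbrev Mat := Matrix (Fin 2) (Fin 2) ℝ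
def Mm (x : ℝ) : Mat := !![x, -1; 1, 0]
def Lm (l : ℝ) : Mat := !![1, 0; l, 1]
def Ti (l : ℝ) : Mat := !![1, -l; 0, 1]
noncomputable def Pw (w : List ℝ) : Mat := (w.map Mm).prod
noncomputable def Kc (w : List ℝ) : ℝ := Pw w 0 0
noncomputable def Kt (w : List ℝ) : ℝ := Pw w 1 0
lemma Pw_cons (x : ℝ) (w : List ℝ) : Pw (x :: w) = Mm x * Pw w := by simp [Pw]
lemma Pw_append (u v : List ℝ) : Pw (u ++ v) = Pw u * Pw v := by simp [Pw]
@[simp] lemma Kc_nil : Kc [] = 1 := by simp [Kc, Pw, Matrix.one_apply]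
@[simp] lemma Kt_nil : Kt [] = 0 := by simp [Kt, Pw, Matrix.one_apply]
lemma Kc_cons (x : ℝ) (w : List ℝ) : Kc (x :: w) = x * Kc w - Kt w := by
  simp [Kc, Kt, Pw_cons, Matrix.mul_apply, Fin.sum_univ_two, Mm]; ring
lemma Kt_cons (x : ℝ) (w : List ℝ) : Kt (x :: w) = Kc w := by
  simp [Kc, Kt, Pw_cons, Matrix.mul_apply, Fin.sum_univ_two, Mm]
@[simp] lemma Kc_single (x : ℝ) : Kc [x] = x := by rw [Kc_cons]; simp
lemma Mm_mul_L (l x : ℝ) : Mm x * Lm l = Mm (x - l) := by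
  ext i j
  fin_cases i <;> fin_cases j <;> simp [Mm, Lm, Matrix.mul_apply, Fin.sum_univ_two] <;> ring
lemma Ti_mul_Mm (l x : ℝ) : Ti l * Mm x = Mm (x - l) := by
  ext i j
  fin_cases i <;> fin_cases j <;> simp [Ti, Mm, Matrix.mul_apply, Fin.sum_univ_two] <;> ring
lemma L_mul_00 (l : ℝ) (Y : Mat) : (Lm l * Y) 0 0 = Y 0 0 := by
  simp [Lm, Matrix.mul_apply, Fin.sum_univ_two]
lemma mul_Ti_00 (l : ℝ) (Y : Mat) : (Y * Ti l) 0 0 = Y 0 0 := by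
  simp [Ti, Matrix.mul_apply, Fin.sum_univ_two]
lemma Pw_rep (l : ℝ) (n : ℕ) :
    Pw (List.replicate (n+1) l) = !![S l (n+2), -(S l (n+1)); S l (n+1), -(S l n)] := by
  induction n with
  | zero =>
    rw [List.replicate_one, show Pw [l] = Mm l from by simp [Pw]]
    ext i j
    fin_cases i <;> fin_cases j <;> simp [Mm, S_rec]
  | succ n ih =>
    rw [List.replicate_succ, Pw_cons, ih]
    ext i j
    fin_cases i <;> fin_cases j <;>
      simp [Mm, Matrix.mul_apply, Fin.sum_univ_two, S_rec] <;> ring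
lemma Kc_rep (l : ℝ) (n : ℕ) : Kc (List.replicate n l) = S l (n+1) := by
  cases n with
  | zero => simp [Kc, Pw, Matrix.one_apply]
  | succ n => rw [Kc, Pw_rep]; simp
lemma Kt_rep (l : ℝ) (n : ℕ) : Kt (List.replicate n l) = S l n := by
  cases n with
  | zero => simp [Kt, Pw, Matrix.one_apply]
  | succ n => rw [Kt, Pw_rep]; simp

section Elems
variable {l : ℝ} {q : ℕ}
lemma rep_eq_LTi (hSq2 : S l (q+2) = 1) (hSq1 : S l (q+1) = l) (hSq : S l q = l*l-1) :
    Pw (List.replicate (q+1) l) = Lm l * Ti l := by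
  rw [Pw_rep, hSq2, hSq1, hSq]
  ext i j
  fin_cases i <;> fin_cases j <;>
    simp [Lm, Ti, Matrix.mul_apply, Fin.sum_univ_two] <;> ring
lemma E3 (hLT : Pw (List.replicate (q+1) l) = Lm l * Ti l) (u v : List ℝ) (a b : ℝ) :
    Pw (u ++ a :: (List.replicate (q+1) l ++ b :: v)) = Pw (u ++ (a-l) :: (b-l) :: v) := by
  rw [Pw_append, Pw_append, Pw_cons, Pw_cons, Pw_cons, Pw_append, Pw_cons, hLT]
  congr 1
  rw [← Mm_mul_L l a, ← Ti_mul_Mm l b]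
  simp only [mul_assoc]
lemma E1 (hLT : Pw (List.replicate (q+1) l) = Lm l * Ti l) (v : List ℝ) (b : ℝ) :
    Kc (List.replicate (q+1) l ++ b :: v) = Kc ((b-l) :: v) := by
  unfold Kc
  rw [Pw_append, Pw_cons, Pw_cons, hLT, ← Ti_mul_Mm l b]
  simp only [mul_assoc]
  rw [L_mul_00]
lemma E2 (hLT : Pw (List.replicate (q+1) l) = Lm l * Ti l) (u : List ℝ) (a : ℝ) :
    Kc (u ++ a :: List.replicate (q+1) l) = Kc (u ++ [a-l]) := by
  unfold Kc
  rw [Pw_append, Pw_cons, hLT, Pw_append, Pw_cons, show Pw ([] : List ℝ) = 1 from rfl,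
    mul_one, ← mul_assoc (Mm a), Mm_mul_L, ← mul_assoc, mul_Ti_00]
end Elems

lemma infix_append_cases {α : Type*} {t u v : List α} (h : t <:+: u ++ v) :
    t <:+: u ∨ t <:+: v ∨
      ∃ u₁ v₁, u₁ <:+ u ∧ v₁ <+: v ∧ u₁ ≠ [] ∧ v₁ ≠ [] ∧ t = u₁ ++ v₁ := by
  obtain ⟨s, e, hse⟩ := h
  rw [List.append_assoc] at hse
  rcases List.append_eq_append_iff.mp hse.symm with ⟨a', ha1, ha2⟩ | ⟨c', hc1, hc2⟩
  · right; left
    exact ⟨a', e, by rw [ha2, List.append_assoc]⟩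
  · rcases List.append_eq_append_iff.mp hc2 with ⟨a', hA1, hA2⟩ | ⟨d', hD1, hD2⟩
    · left
      have h1 : t <+: c' := ⟨a', hA1.symm⟩
      have h2 : c' <:+ u := ⟨s, hc1.symm⟩
      exact h1.isInfix.trans h2.isInfix
    · rcases eq_or_ne c' [] with rfl | hc
      · right; left
        refine List.IsPrefix.isInfix ⟨e, ?_⟩
        simp at hD1
        rw [hD1, ← hD2]
      rcases eq_or_ne d' [] with rfl | hd
      · left
        simp only [List.append_nil] at hD1
        refine List.IsSuffix.isInfix ⟨s, ?_⟩
        rw [hD1]; exact hc1.symm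
      · right; right
        exact ⟨c', d', ⟨s, hc1.symm⟩, ⟨e, hD2.symm⟩, hc, hd, hD1⟩

lemma suffix_concat_cases {α : Type*} {t u : List α} {x : α} (h : t <:+ u ++ [x]) :
    t = [] ∨ ∃ us, us <:+ u ∧ t = us ++ [x] := by
  rcases List.eq_nil_or_concat t with rfl | ⟨t₀, y, rfl⟩
  · left; rfl
  · right
    obtain ⟨s, hs⟩ := h
    have h2 : (s ++ t₀) ++ [y] = u ++ [x] := by rw [← hs]; simp
    have hy : y = x ∧ s ++ t₀ = u := by
      have := congrArg List.reverse h2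
      simp at this
      exact ⟨this.1, List.reverse_injective (by simpa using this.2)⟩
    exact ⟨t₀, ⟨s, hy.2⟩, by rw [hy.1, List.concat_eq_append]⟩

lemma prefix_cons_cases {α : Type*} {t v : List α} {x : α} (h : t <+: x :: v) :
    t = [] ∨ ∃ vp, vp <+: v ∧ t = x :: vp := by
  cases t with
  | nil => left; rfl
  | cons y t₀ =>
    right
    obtain ⟨s, hs⟩ := h
    simp only [List.cons_append, List.cons.injEq] at hs
    exact ⟨t₀, ⟨s, hs.2⟩, by rw [hs.1]⟩

lemma infix_singleton {α : Type*} {t : List α} {x : α} (h : t <:+: [x]) :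
    t = [] ∨ t = [x] := by
  obtain ⟨s, e, hse⟩ := h
  have hl := congrArg List.length hse
  simp at hl
  cases t with
  | nil => left; rfl
  | cons y t₀ =>
    right
    simp at hl
    have hs : s = [] := List.length_eq_zero_iff.mp (by omega)
    have he : e = [] := List.length_eq_zero_iff.mp (by omega)
    have ht : t₀ = [] := List.length_eq_zero_iff.mp (by omega)
    subst hs he ht
    simp at hse
    rw [hse]

def AIP (w : List ℝ) : Prop := ∀ t, t <:+: w → 0 < Kc t

lemma AIP.mono {w t : List ℝ} (h : AIP w) (ht : t <:+: w) : AIP t :=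
  fun s hs => h s (hs.trans ht)

section Red
variable {l : ℝ} {q : ℕ}

lemma AIP_interior (hLT : Pw (List.replicate (q+1) l) = Lm l * Ti l) {u v : List ℝ} {a b : ℝ}
    (h : AIP (u ++ a :: (List.replicate (q+1) l ++ b :: v))) :
    AIP (u ++ (a-l) :: (b-l) :: v) := by
  have left_piece : ∀ us, us <:+ u → 0 < Kc (us ++ [a-l]) := by
    rintro us ⟨s, hs⟩
    rw [← E2 hLT us a]
    apply h
    exact ⟨s, b :: v, by rw [← hs]; simp⟩
  have right_piece : ∀ vp, vp <+: v → 0 < Kc ((b-l) :: vp) := by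
    rintro vp ⟨e, he⟩
    rw [← E1 hLT vp b]
    apply h
    exact ⟨u ++ [a], e, by rw [← he]; simp⟩
  have mid_piece : ∀ us vp, us <:+ u → vp <+: v → 0 < Kc (us ++ (a-l) :: (b-l) :: vp) := by
    rintro us vp ⟨s, hs⟩ ⟨e, he⟩
    have hE : Kc (us ++ (a-l) :: (b-l) :: vp) = Kc (us ++ a :: (List.replicate (q+1) l ++ b :: vp)) := by
      unfold Kc; rw [E3 hLT us vp a b]
    rw [hE]
    apply h
    exact ⟨s, e, by rw [← hs, ← he]; simp⟩
  intro t ht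
  rw [show u ++ (a-l) :: (b-l) :: v = (u ++ [a-l]) ++ ((b-l) :: v) from by simp] at ht
  rcases infix_append_cases ht with h1 | h2 | ⟨u₁, v₁, hu₁, hv₁, hu₁n, hv₁n, rfl⟩
  · rcases infix_append_cases h1 with h3 | h4 | ⟨u₁, v₁, hu₁, hv₁, hu₁n, hv₁n, rfl⟩
    · exact h t (h3.trans ⟨[], a :: (List.replicate (q+1) l ++ b :: v), by simp⟩)
    · rcases infix_singleton h4 with rfl | rfl
      · simp
      · simpa using left_piece [] ⟨u, by simp⟩
    · rcases prefix_cons_cases hv₁ with rfl | ⟨vp, hvp, rfl⟩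
      · exact absurd rfl hv₁n
      · have hvp' : vp = [] := List.prefix_nil.mp hvp
        subst hvp'
        exact left_piece u₁ hu₁
  · rcases infix_append_cases (by simpa using h2 : t <:+: [b-l] ++ v) with h3 | h4 |
      ⟨u₁, v₁, hu₁, hv₁, hu₁n, hv₁n, rfl⟩
    · rcases infix_singleton h3 with rfl | rfl
      · simp
      · simpa using right_piece [] ⟨v, by simp⟩
    · refine h t (h4.trans ⟨u ++ [a] ++ List.replicate (q+1) l ++ [b], [], by simp⟩)
    · rcases suffix_concat_cases (u := ([] : List ℝ)) (by simpa using hu₁) with rfl | ⟨us, hus, rfl⟩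
      · exact absurd rfl hu₁n
      · have hus' : us = [] := List.suffix_nil.mp hus
        subst hus'
        simpa using right_piece v₁ hv₁
  · rcases suffix_concat_cases hu₁ with rfl | ⟨us, hus, rfl⟩
    · exact absurd rfl hu₁n
    · rcases prefix_cons_cases hv₁ with rfl | ⟨vp, hvp, rfl⟩
      · exact absurd rfl hv₁n
      · have : us ++ [a-l] ++ (b-l) :: vp = us ++ (a-l) :: (b-l) :: vp := by simp
        rw [this]
        exact mid_piece us vp hus hvp

lemma AIP_left (hLT : Pw (List.replicate (q+1) l) = Lm l * Ti l) {v : List ℝ} {b : ℝ}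
    (h : AIP (List.replicate (q+1) l ++ b :: v)) :
    AIP ((b-l) :: v) := by
  have right_piece : ∀ vp, vp <+: v → 0 < Kc ((b-l) :: vp) := by
    rintro vp ⟨e, he⟩
    rw [← E1 hLT vp b]
    apply h
    exact ⟨[], e, by rw [← he]; simp⟩
  intro t ht
  rcases infix_append_cases (by simpa using ht : t <:+: [b-l] ++ v) with h3 | h4 |
      ⟨u₁, v₁, hu₁, hv₁, hu₁n, hv₁n, rfl⟩
  · rcases infix_singleton h3 with rfl | rfl
    · simp
    · simpa using right_piece [] ⟨v, by simp⟩
  · exact h t (h4.trans ⟨List.replicate (q+1) l ++ [b], [], by simp⟩)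
  · rcases suffix_concat_cases (u := ([] : List ℝ)) (by simpa using hu₁) with rfl | ⟨us, hus, rfl⟩
    · exact absurd rfl hu₁n
    · have hus' : us = [] := List.suffix_nil.mp hus
      subst hus'
      simpa using right_piece v₁ hv₁

lemma AIP_right (hLT : Pw (List.replicate (q+1) l) = Lm l * Ti l) {u : List ℝ} {a : ℝ}
    (h : AIP (u ++ a :: List.replicate (q+1) l)) :
    AIP (u ++ [a-l]) := by
  have left_piece : ∀ us, us <:+ u → 0 < Kc (us ++ [a-l]) := by
    rintro us ⟨s, hs⟩
    rw [← E2 hLT us a]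
    apply h
    exact ⟨s, [], by rw [← hs]; simp⟩
  intro t ht
  rcases infix_append_cases ht with h3 | h4 | ⟨u₁, v₁, hu₁, hv₁, hu₁n, hv₁n, rfl⟩
  · exact h t (h3.trans ⟨[], a :: List.replicate (q+1) l, by simp⟩)
  · rcases infix_singleton h4 with rfl | rfl
    · simp
    · simpa using left_piece [] ⟨u, by simp⟩
  · rcases prefix_cons_cases hv₁ with rfl | ⟨vp, hvp, rfl⟩
    · exact absurd rfl hv₁n
    · have hvp' : vp = [] := List.prefix_nil.mp hvp
      subst hvp'
      exact left_piece u₁ hu₁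

end Red
section Main
variable {l : ℝ} {q : ℕ}

def Letters (l : ℝ) (w : List ℝ) : Prop := ∀ x ∈ w, ∃ n : ℕ, 1 ≤ n ∧ x = n * l

open scoped Classical in
noncomputable def lead (l : ℝ) : List ℝ → ℕ
  | [] => 0
  | x :: u => if x = l then lead l u + 1 else 0

@[simp] lemma lead_nil (l : ℝ) : lead l [] = 0 := by simp [lead]
lemma lead_cons_eq (l x : ℝ) (u : List ℝ) (hx : x = l) : lead l (x :: u) = lead l u + 1 := by
  simp [lead, hx]
lemma lead_cons_ne (l x : ℝ) (u : List ℝ) (hx : x ≠ l) : lead l (x :: u) = 0 := by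
  simp [lead, hx]

lemma lead_rep_prefix (l : ℝ) (w : List ℝ) : List.replicate (lead l w) l <+: w := by
  induction w with
  | nil => simp [lead]
  | cons x u ih =>
    by_cases hx : x = l
    · rw [lead_cons_eq l x u hx, List.replicate_succ, hx]
      exact (List.prefix_cons_inj l).mpr ih
    · rw [lead_cons_ne l x u hx]
      simp

lemma split_of_rep_prefix {w : List ℝ} {m : ℕ} (hm : q + 1 ≤ m)
    (h : List.replicate m l <+: w) : ∃ u v, w = u ++ List.replicate (q+1) l ++ v := by
  obtain ⟨e, he⟩ := h
  obtain ⟨k, rfl⟩ : ∃ k, m = (q+1) + k := ⟨m - (q+1), by omega⟩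
  refine ⟨[], List.replicate k l ++ e, ?_⟩
  rw [← he]
  simp [List.replicate_add, List.append_assoc]

lemma lead_le (w : List ℝ) (hns : ¬ ∃ u v, w = u ++ List.replicate (q+1) l ++ v) :
    lead l w ≤ q := by
  by_contra hlt
  exact hns (split_of_rep_prefix (by omega) (lead_rep_prefix l w))

lemma Letters.tail {x : ℝ} {u : List ℝ} (h : Letters l (x :: u)) : Letters l u :=
  fun y hy => h y (List.mem_cons_of_mem x hy)

/-- The growth lemma: no interior `(q+1)`-run of `l`'s, some non-`l` letter. -/
lemma growth (hg : Good l q) :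
    ∀ w : List ℝ, Letters l w → (¬ ∃ u v, w = u ++ List.replicate (q+1) l ++ v) →
    (∃ x ∈ w, x ≠ l) →
    l * S l (lead l w + 2) ≤ Kc w ∧
      S l (lead l w + 2) * Kt w ≤ S l (lead l w + 1) * Kc w := by
  have hS2 : S l 2 = l := by rw [S_rec]; simp
  have hl1 : (1:ℝ) ≤ l := hg.one_le
  intro w
  induction w with
  | nil => intro _ _ hbig; simp at hbig
  | cons a u ih =>
    intro hlet hns hbig
    have hlet_u : Letters l u := hlet.tail
    have hns_u : ¬ ∃ u₁ v₁, u = u₁ ++ List.replicate (q+1) l ++ v₁ := by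
      rintro ⟨u₁, v₁, rfl⟩
      exact hns ⟨a :: u₁, v₁, by simp⟩
    obtain ⟨n, hn1, hna⟩ := hlet a List.mem_cons_self
    have hKc : Kc (a :: u) = a * Kc u - Kt u := Kc_cons a u
    have hKt : Kt (a :: u) = Kc u := Kt_cons a u
    by_cases hall : ∀ x ∈ u, x = l
    · -- u is a replicate
      obtain ⟨m, hm⟩ : ∃ m, m = u.length := ⟨u.length, rfl⟩
      have hu_rep : u = List.replicate m l := by
        rw [hm]; exact List.eq_replicate_length.mpr hall
      have hmq : m ≤ q := by
        by_contra hgt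
        refine hns_u (split_of_rep_prefix (m := m) (by omega) ?_)
        rw [hu_rep]
      have ha : a ≠ l := by
        rintro rfl
        obtain ⟨x, hx, hxl⟩ := hbig
        rcases List.mem_cons.mp hx with rfl | hx
        · exact hxl rfl
        · exact hxl (hall x hx)
      have hn2 : 2 ≤ n := by
        by_contra hlt
        have hn1' : n = 1 := by omega
        exact ha (by rw [hna, hn1']; simp)
      have hlead : lead l (a :: u) = 0 := lead_cons_ne l a u ha
      have hKcu : Kc u = S l (m+1) := by rw [hu_rep, Kc_rep]
      have hKtu : Kt u = S l m := by rw [hu_rep, Kt_rep]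
      have hn2R : (2:ℝ) ≤ (n:ℝ) := by exact_mod_cast hn2
      have hSm1 : 0 ≤ S l (m+1) := hg.nonneg (m+1) (by omega)
      have hSm2 : 0 ≤ S l (m+2) := hg.nonneg (m+2) (by omega)
      have hrec : S l (m+2) = l * S l (m+1) - S l m := S_rec l m
      have hKcw : S l (m+2) + l * S l (m+1) ≤ Kc (a :: u) := by
        rw [hKc, hKcu, hKtu, hna]
        nlinarith [mul_nonneg (mul_nonneg (sub_nonneg.mpr hn2R) hg.l_pos.le) hSm1]
      constructor
      · -- l * S 2 ≤ Kc w
        rw [hlead]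
        simp only [Nat.zero_add]
        rw [hS2]
        rcases Nat.eq_zero_or_pos m with rfl | hm1
        · have h0 : S l 2 + l ≤ Kc (a :: u) := by simpa using hKcw
          rw [hS2] at h0
          nlinarith [hg.le_two, hg.l_pos]
        · have h1 : (1:ℝ) ≤ S l (m+2) := hg.ge_one (m+2) (by omega) (by omega)
          have h2 : l ≤ S l (m+1) := hg.ge_l (m+1) (by omega) (by omega)
          nlinarith [hg.l_pos]
      · -- S 2 * Kt w ≤ S 1 * Kc w
        rw [hlead, hKt]
        simp only [Nat.zero_add, S_one, one_mul]
        rw [hS2, hKcu]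
        nlinarith [hg.l_pos]
    · -- u contains a non-l letter
      push_neg at hall
      obtain ⟨hA_u, hB_u⟩ := ih hlet_u hns_u hall
      set t := lead l u with hT
      have htq : t ≤ q := lead_le u hns_u
      have hSt2pos : 0 < S l (t+2) := hg.pos (t+2) (by omega) (by omega)
      have hSt2ge1 : 1 ≤ S l (t+2) := hg.ge_one (t+2) (by omega) (by omega)
      have hKcu_pos : 0 < Kc u := by
        have hx := mul_le_mul_of_nonneg_left hSt2ge1 hg.l_pos.le
        nlinarith [hg.l_pos]
      by_cases ha : a = l
      · -- lead w = t + 1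
        rw [ha] at hKc hKt hns ⊢
        have hlead : lead l (l :: u) = t + 1 := lead_cons_eq l l u rfl
        have htq2 : t + 1 ≤ q := by
          have := lead_le (l :: u) hns
          rw [hlead] at this; exact this
        have e : S l (t+2) * Kc (l :: u) = l * (S l (t+2) * Kc u) - S l (t+2) * Kt u := by
          rw [hKc]; ring
        have e2 : S l (t+3) * Kc u = l * (S l (t+2) * Kc u) - S l (t+1) * Kc u := by
          rw [show t+3 = (t+1)+2 from by omega, S_rec, show t+1+1 = t+2 from by omega]; ring
        have key : S l (t+3) * Kc u ≤ S l (t+2) * Kc (l :: u) := by linarith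
        constructor
        · rw [hlead]
          have h5 : S l (t+2) * (l * S l (t+3)) ≤ S l (t+2) * Kc (l :: u) := by
            have hSt3 : 0 ≤ S l (t+3) := hg.nonneg (t+3) (by omega)
            nlinarith
          have := le_of_mul_le_mul_left h5 hSt2pos
          rw [show t+1+2 = t+3 from by omega]
          exact this
        · rw [hlead, hKt, show t+1+2 = t+3 from by omega, show t+1+1 = t+2 from by omega]
          exact key
      · -- big letter: lead w = 0
        have hn2 : 2 ≤ n := by
          by_contra hlt
          have hn1' : n = 1 := by omega
          exact ha (by rw [hna, hn1']; simp)
        have hlead : lead l (a :: u) = 0 := lead_cons_ne l a u ha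
        have hn2R : (2:ℝ) ≤ (n:ℝ) := by exact_mod_cast hn2
        have hSt3 : 0 ≤ S l (t+3) := hg.nonneg (t+3) (by omega)
        have hKtu_le : Kt u ≤ l * Kc u := by
          have e2 : S l (t+3) = l * S l (t+2) - S l (t+1) := by
            rw [show t+3 = (t+1)+2 from by omega, S_rec, show t+1+1 = t+2 from by omega]
          have h6 : S l (t+2) * Kt u ≤ S l (t+2) * (l * Kc u) := by nlinarith
          exact le_of_mul_le_mul_left h6 hSt2pos
        have hKcw_ge : l * Kc u ≤ Kc (a :: u) := by
          rw [hKc, hna]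
          nlinarith [mul_nonneg (mul_nonneg (sub_nonneg.mpr hn2R) hg.l_pos.le) hKcu_pos.le,
            hKtu_le]
        constructor
        · rw [hlead]
          simp only [Nat.zero_add]
          rw [hS2]
          nlinarith [hg.l_pos]
        · rw [hlead, hKt]
          simp only [Nat.zero_add, S_one, one_mul]
          rw [hS2]
          exact hKcw_ge

end Main


section MainProp
variable {l : ℝ} {q : ℕ}

lemma vGood (hS3 : S l (q+3) = 0) {u v : List ℝ}
    (haip : AIP (u ++ List.replicate (q+1) l ++ v)) :
    v = [] ∨ ∃ b v₀, v = b :: v₀ ∧ b ≠ l := by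
  cases v with
  | nil => left; rfl
  | cons b v₀ =>
    right
    refine ⟨b, v₀, rfl, ?_⟩
    intro hbl
    rw [hbl] at haip
    have hinf : List.replicate (q+2) l <:+: u ++ List.replicate (q+1) l ++ (l :: v₀) := by
      refine ⟨u, v₀, ?_⟩
      rw [show q+2 = (q+1)+1 from rfl, List.replicate_succ']
      simp
    have hpos := haip _ hinf
    rw [Kc_rep, show q+2+1 = q+3 from rfl, hS3] at hpos
    exact lt_irrefl _ hpos

lemma cons_rep_comm (l : ℝ) (q : ℕ) (v : List ℝ) :
    l :: List.replicate (q+1) l ++ v = List.replicate (q+1) l ++ l :: v := by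
  rw [← List.replicate_succ, List.replicate_succ', List.append_assoc, List.singleton_append]

lemma goodSplit (hS3 : S l (q+3) = 0) :
    ∀ u v : List ℝ, AIP (u ++ List.replicate (q+1) l ++ v) →
    ∃ u' v', u ++ List.replicate (q+1) l ++ v = u' ++ List.replicate (q+1) l ++ v' ∧
      (u' = [] ∨ ∃ u₀ a, u' = u₀ ++ [a] ∧ a ≠ l) ∧
      (v' = [] ∨ ∃ b v₀, v' = b :: v₀ ∧ b ≠ l) := by
  intro u
  induction u using List.reverseRecOn with
  | nil =>
    intro v haip
    exact ⟨[], v, rfl, Or.inl rfl, vGood hS3 haip⟩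
  | append_singleton u₀ a ih =>
    intro v haip
    by_cases ha : a = l
    · have heq : (u₀ ++ [a]) ++ List.replicate (q+1) l ++ v
          = u₀ ++ List.replicate (q+1) l ++ (l :: v) := by
        rw [ha]
        simp only [List.append_assoc, List.singleton_append]
        rw [cons_rep_comm l q v]
      rw [heq] at haip
      obtain ⟨u', v', h, hu, hv⟩ := ih (l :: v) haip
      exact ⟨u', v', heq.trans h, hu, hv⟩
    · exact ⟨u₀ ++ [a], v, rfl, Or.inr ⟨u₀, a, rfl, ha⟩, vGood hS3 haip⟩

lemma letter_ge_two (hg : Good l q) {w : List ℝ} (hlet : Letters l w) {x : ℝ}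
    (hx : x ∈ w) (hxl : x ≠ l) :
    ∃ n : ℕ, 2 ≤ n ∧ x = n * l ∧ x - l = ((n-1 : ℕ) : ℝ) * l := by
  obtain ⟨n, hn1, hxv⟩ := hlet x hx
  have hn2 : 2 ≤ n := by
    by_contra hlt
    exact hxl (by rw [hxv, show n = 1 from by omega]; simp)
  refine ⟨n, hn2, hxv, ?_⟩
  rw [hxv]
  push_cast [Nat.cast_sub (by omega : 1 ≤ n)]
  ring

theorem mainProp (hg : Good l q) (hLT : Pw (List.replicate (q+1) l) = Lm l * Ti l) :
    ∀ N, ∀ w : List ℝ, w.length ≤ N → Letters l w → AIP w → Kc w = 1 ∨ l ≤ Kc w := by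
  intro N
  induction N with
  | zero =>
    intro w hw _ _
    have hnil : w = [] := List.length_eq_zero_iff.mp (by omega)
    subst hnil; left; simp
  | succ N ih =>
    intro w hlen hlet haip
    by_cases hsplit : ∃ u v, w = u ++ List.replicate (q+1) l ++ v
    · obtain ⟨u, v, rfl⟩ := hsplit
      obtain ⟨u', v', heq, hu, hv⟩ := goodSplit hg.Stop u v haip
      rw [heq] at hlen hlet haip ⊢
      rcases hu with rfl | ⟨u₀, a, rfl, hanl⟩
      · rcases hv with rfl | ⟨b, v₀, rfl, hbnl⟩
        · left
          simp only [List.nil_append, List.append_nil]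
          rw [Kc_rep]
          exact hg.Stop1
        · -- boundary left
          obtain ⟨nb, hnb2, hbv, hbsub⟩ := letter_ge_two hg hlet (x := b) (by simp) hbnl
          have hKeq : Kc ([] ++ List.replicate (q+1) l ++ (b :: v₀)) = Kc ((b - l) :: v₀) := by
            simp only [List.nil_append]
            exact E1 hLT v₀ b
          rw [hKeq]
          refine ih ((b-l) :: v₀) ?_ ?_ ?_
          · simp only [List.length_append, List.length_replicate, List.length_nil,
              List.length_cons] at hlen ⊢
            omega
          · intro x hx
            rcases List.mem_cons.mp hx with rfl | hx
            · exact ⟨nb - 1, by omega, hbsub⟩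
            · exact hlet x (by simp [hx])
          · exact AIP_left hLT (by simpa using haip)
      · rcases hv with rfl | ⟨b, v₀, rfl, hbnl⟩
        · -- boundary right
          obtain ⟨na, hna2, hav, hasub⟩ := letter_ge_two hg hlet (x := a) (by simp) hanl
          have hshape : (u₀ ++ [a]) ++ List.replicate (q+1) l ++ ([] : List ℝ)
              = u₀ ++ a :: List.replicate (q+1) l := by simp
          rw [hshape] at haip hlen ⊢
          rw [E2 hLT u₀ a]
          refine ih (u₀ ++ [a - l]) ?_ ?_ ?_
          · simp only [List.length_append, List.length_replicate, List.length_cons,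
              List.length_nil] at hlen ⊢
            omega
          · intro x hx
            rcases List.mem_append.mp hx with hx | hx
            · exact hlet x (by simp [hx])
            · rw [List.mem_singleton.mp hx]
              exact ⟨na - 1, by omega, hasub⟩
          · exact AIP_right hLT haip
        · -- interior
          obtain ⟨na, hna2, hav, hasub⟩ := letter_ge_two hg hlet (x := a) (by simp) hanl
          obtain ⟨nb, hnb2, hbv, hbsub⟩ := letter_ge_two hg hlet (x := b) (by simp) hbnl
          have hshape : (u₀ ++ [a]) ++ List.replicate (q+1) l ++ (b :: v₀)
              = u₀ ++ a :: (List.replicate (q+1) l ++ b :: v₀) := by simp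
          rw [hshape] at haip hlen ⊢
          have hKeq : Kc (u₀ ++ a :: (List.replicate (q+1) l ++ b :: v₀))
              = Kc (u₀ ++ (a-l) :: (b-l) :: v₀) := by
            unfold Kc
            rw [E3 hLT u₀ v₀ a b]
          rw [hKeq]
          refine ih (u₀ ++ (a-l) :: (b-l) :: v₀) ?_ ?_ ?_
          · simp only [List.length_append, List.length_replicate, List.length_cons] at hlen ⊢
            omega
          · intro x hx
            rcases List.mem_append.mp hx with hx | hx
            · exact hlet x (by simp [hx])
            · rcases List.mem_cons.mp hx with rfl | hx
              · exact ⟨na - 1, by omega, hasub⟩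
              rcases List.mem_cons.mp hx with rfl | hx
              · exact ⟨nb - 1, by omega, hbsub⟩
              · exact hlet x (by simp [hx])
          · exact AIP_interior hLT haip
    · by_cases hall : ∀ x ∈ w, x = l
      · obtain ⟨m, hm⟩ : ∃ m, w.length = m := ⟨_, rfl⟩
        have hw : w = List.replicate m l := by
          rw [← hm]; exact List.eq_replicate_length.mpr hall
        have hlq : m ≤ q := by
          by_contra h
          exact hsplit (split_of_rep_prefix (m := m) (by omega)
            (by rw [hw]))
        rw [hw, Kc_rep]
        rcases Nat.eq_zero_or_pos m with rfl | h1
        · left; simp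
        · right; exact hg.ge_l (m + 1) (by omega) (by omega)
      · push_neg at hall
        right
        obtain ⟨hA, _⟩ := growth hg w hlet hsplit hall
        have hlw : lead l w ≤ q := lead_le w hsplit
        have h1 : 1 ≤ S l (lead l w + 2) := hg.ge_one _ (by omega) (by omega)
        nlinarith [hg.l_pos]

end MainProp

section FriezeGlue

lemma infix_map_range {α : Type*} (g : ℕ → α) (m : ℕ) (t : List α)
    (h : t <:+: (List.range m).map g) :
    ∃ s, s + t.length ≤ m ∧ t = (List.range t.length).map (fun r => g (s + r)) := by
  obtain ⟨u, v, huv⟩ := h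
  have hlen : u.length + t.length + v.length = m := by
    have hc := congrArg List.length huv
    simp at hc
    omega
  refine ⟨u.length, by omega, ?_⟩
  have hA : t = (((List.range m).map g).drop u.length).take t.length := by
    rw [← huv, List.append_assoc, List.drop_left]
    exact List.take_left.symm
  obtain ⟨k, hk⟩ : ∃ k, m = u.length + k := ⟨t.length + v.length, by omega⟩
  have hB : (((List.range m).map g).drop u.length).take t.length
      = (List.range t.length).map (fun r => g (u.length + r)) := by
    rw [hk, List.range_add, List.map_append, List.drop_left' (by simp), List.map_map,
      ← List.map_take, List.take_range, min_eq_left (by omega)]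
    rfl
  rw [hB] at hA
  exact hA

lemma Kc_concat (u : List ℝ) (x : ℝ) : Kc (u ++ [x]) = x * Kc u + Pw u 0 1 := by
  unfold Kc
  rw [Pw_append, show Pw [x] = Mm x from by simp [Pw]]
  simp [Mm, Matrix.mul_apply, Fin.sum_univ_two]
  ring

lemma Pw01_concat (u : List ℝ) (x : ℝ) : Pw (u ++ [x]) 0 1 = - Kc u := by
  unfold Kc
  rw [Pw_append, show Pw [x] = Mm x from by simp [Pw]]
  simp [Mm, Matrix.mul_apply, Fin.sum_univ_two]

variable (f : ℤ → ℤ → ℝ)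

noncomputable def W (i : ℤ) (m : ℕ) : List ℝ :=
  (List.range m).map (fun t : ℕ => f (i + t) (i + t + 2))

variable {f}

/-- frieze recurrence -/
lemma FR (h1 : ∀ i : ℤ, f i i = 0) (h2 : ∀ i : ℤ, f i (i + 1) = 1)
    (h3 : ∀ i j : ℤ, i + 1 ≤ j → 0 < f i j)
    (h4 : ∀ i j : ℤ, i + 1 ≤ j → f i j * f (i + 1) (j + 1) - f i (j + 1) * f (i + 1) j = 1)
    (d : ℕ) :
    ∀ i : ℤ, f i (i + d + 2) = f (i + d) (i + d + 2) * f i (i + d + 1) - f i (i + d) := by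
  induction d with
  | zero =>
    intro i
    push_cast
    simp only [add_zero]
    rw [h2 i, h1 i]
    ring
  | succ d ih =>
    intro i
    have hih := ih (i + 1)
    have hu1 := h4 i (i + d + 2) (by omega)
    have hu2 := h4 i (i + d + 1) (by omega)
    have hpos := h3 (i + 1) (i + d + 2) (by omega)
    push_cast
    ring_nf
    ring_nf at hih hu1 hu2 hpos
    have key : (f i (3+i+(d:ℤ)) - (f (1+i+(d:ℤ)) (3+i+(d:ℤ)) * f i (2+i+(d:ℤ)) - f i (1+i+(d:ℤ))))
        * f (1+i) (2+i+(d:ℤ)) = 0 := by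
      linear_combination (-1 : ℝ) * hu1 + f i (2+i+(d:ℤ)) * hih + hu2
    have hD : f (1+i) (2+i+(d:ℤ)) ≠ 0 := ne_of_gt hpos
    have hz := (mul_eq_zero.mp key).resolve_right hD
    linarith

lemma Kc_W (h1 : ∀ i : ℤ, f i i = 0) (h2 : ∀ i : ℤ, f i (i + 1) = 1)
    (h3 : ∀ i j : ℤ, i + 1 ≤ j → 0 < f i j)
    (h4 : ∀ i j : ℤ, i + 1 ≤ j → f i j * f (i + 1) (j + 1) - f i (j + 1) * f (i + 1) j = 1)
    (m : ℕ) : ∀ i : ℤ, Kc (W f i m) = f i (i + 1 + m) ∧ Pw (W f i m) 0 1 = - f i (i + m) := by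
  induction m with
  | zero =>
    intro i
    constructor
    · rw [show W f i 0 = [] from rfl]
      push_cast
      simp only [add_zero]
      rw [h2 i]
      simp
    · rw [show W f i 0 = [] from rfl]
      push_cast
      simp only [add_zero]
      rw [h1 i]
      simp [Pw, Matrix.one_apply]
  | succ m ih =>
    intro i
    obtain ⟨ihK, ihP⟩ := ih i
    have hW : W f i (m+1) = W f i m ++ [f (i + m) (i + m + 2)] := by
      unfold W
      rw [List.range_succ, List.map_append]
      rfl
    rw [hW]
    have hFR := FR h1 h2 h3 h4 m i
    constructor
    · rw [Kc_concat, ihK, ihP]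
      push_cast
      ring_nf
      ring_nf at hFR
      linarith
    · rw [Pw01_concat, ihK]
      push_cast
      ring_nf

lemma AIP_W (h1 : ∀ i : ℤ, f i i = 0) (h2 : ∀ i : ℤ, f i (i + 1) = 1)
    (h3 : ∀ i j : ℤ, i + 1 ≤ j → 0 < f i j)
    (h4 : ∀ i j : ℤ, i + 1 ≤ j → f i j * f (i + 1) (j + 1) - f i (j + 1) * f (i + 1) j = 1)
    (m : ℕ) (i : ℤ) : AIP (W f i m) := by
  intro t ht
  obtain ⟨s, hsm, hteq⟩ := infix_map_range (fun t : ℕ => f (i + t) (i + t + 2)) m t ht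
  have hfun : (fun r => f (i + (↑(s + r) : ℤ)) (i + (↑(s + r) : ℤ) + 2))
      = (fun r : ℕ => f (i + (s:ℤ) + r) (i + (s:ℤ) + r + 2)) := by
    funext r
    congr 1 <;> push_cast <;> ring
  have hWt : t = W f (i + s) t.length := by
    conv_lhs => rw [hteq]
    unfold W
    rw [hfun]
  rw [hWt, (Kc_W h1 h2 h3 h4 t.length (i + s)).1]
  exact h3 (i + s) (i + s + 1 + t.length) (by omega)

lemma Letters_W {p : ℕ} (hl : ∀ k : ℤ, ∃ n : ℕ, 0 < n ∧ f k (k + 2) = n * lam p)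
    (i : ℤ) (m : ℕ) : Letters (lam p) (W f i m) := by
  intro x hx
  unfold W at hx
  obtain ⟨r, hr, hre⟩ := List.mem_map.mp hx
  obtain ⟨n, hn, he⟩ := hl (i + r)
  exact ⟨n, hn, by rw [← hre, ← he]⟩

end FriezeGlue

end IFP

/-- All entries of an infinite frieze pattern of type `Λ_p` lie in `{1} ∪ [λ_p, ∞)`. -/
theorem infFrieze_entries_one_or_ge_lambda (p : ℕ) (hp : 3 ≤ p) (f : ℤ → ℤ → ℝ)
    (hf : IsInfFrieze f) (hl : IsTypeLambda p f) (i j : ℤ) (hij : i < j) :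
    f i j = 1 ∨ lam p ≤ f i j := by
  obtain ⟨h1, h2, h3, h4⟩ := hf
  obtain ⟨q, rfl⟩ : ∃ q, p = q + 3 := ⟨p - 3, by omega⟩
  have hg : IFP.Good (lam (q+3)) q := IFP.good_lam q
  have hLT := IFP.rep_eq_LTi hg.Stop1 hg.Sq1 hg.Sq
  obtain ⟨m, rfl⟩ : ∃ m : ℕ, j = i + 1 + m := ⟨(j - i - 1).toNat, by omega⟩
  rw [← (IFP.Kc_W h1 h2 h3 h4 m i).1]
  exact IFP.mainProp hg hLT (IFP.W f i m).length (IFP.W f i m) le_rfl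
    (IFP.Letters_W hl i m) (IFP.AIP_W h1 h2 h3 h4 m i)
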